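/- For all real numbers x ≥ 0 and y ≥ 0, the series ∑_{n=0}^{∞} (y^{n+1/2} e^{−y} / Γ(n+3/2)) x^{n+1} converges and equals √x · e^{−y} · e^{xy} · erf(√(xy)). -/

import Mathlib

/-- The error function `erf(x) = (2/√π) ∫_0^x e^(-t²) dt`. -/
noncomputable def erf (x : ℝ) : ℝ :=
  (2 / Real.sqrt Real.pi) * ∫ t in (0 : ℝ)..x, Real.exp (-t ^ 2)

open Real MeasureTheory Nat

lemma exp_hasSum' (w : ℝ) : HasSum (fun n : ℕ => w ^ n / n !) (Real.exp w) := by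
  rw [Real.exp_eq_exp_ℝ]
  exact NormedSpace.expSeries_div_hasSum_exp w

lemma gamma_pos' (n : ℕ) : 0 < Real.Gamma ((n : ℝ) + 3 / 2) :=
  Real.Gamma_pos_of_pos (by positivity)

lemma key_integral (z : ℝ) (n : ℕ) :
    ∫ t in (0:ℝ)..z, (z ^ 2 - t ^ 2) ^ n
      = (n ! * Real.sqrt Real.pi / (2 * Real.Gamma ((n : ℝ) + 3 / 2))) * z ^ (2 * n + 1) := by
  induction n with
  | zero =>
    have hG : Real.Gamma (3 / 2 : ℝ) = (1 / 2) * Real.sqrt Real.pi := by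
      rw [show (3 / 2 : ℝ) = 1 / 2 + 1 by norm_num,
        Real.Gamma_add_one (by norm_num), Real.Gamma_one_half_eq]
    have hπ : Real.sqrt Real.pi ≠ 0 := by positivity
    simp [hG]
    field_simp
  | succ n ih =>
    have hcont1 : Continuous fun t : ℝ => (z ^ 2 - t ^ 2) ^ (n + 1) := by fun_prop
    have hcont2 : Continuous fun t : ℝ => (z ^ 2 - t ^ 2) ^ n := by fun_prop
    have key0 : (∫ t in (0:ℝ)..z,
        ((2 * (n:ℝ) + 3) * (z ^ 2 - t ^ 2) ^ (n + 1)
          - 2 * ((n:ℝ) + 1) * z ^ 2 * (z ^ 2 - t ^ 2) ^ n)) = 0 := by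
      have hderiv : ∀ t ∈ Set.uIcc (0:ℝ) z,
          HasDerivAt (fun t : ℝ => t * (z ^ 2 - t ^ 2) ^ (n + 1))
            ((2 * (n:ℝ) + 3) * (z ^ 2 - t ^ 2) ^ (n + 1)
              - 2 * ((n:ℝ) + 1) * z ^ 2 * (z ^ 2 - t ^ 2) ^ n) t := by
        intro t _
        have h1 : HasDerivAt (fun t : ℝ => z ^ 2 - t ^ 2) (-(2 * t)) t := by
          simpa using (hasDerivAt_pow 2 t).const_sub (z ^ 2)
        have h3 : HasDerivAt (fun t : ℝ => t * (z ^ 2 - t ^ 2) ^ (n + 1)) _ t :=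
          (hasDerivAt_id t).mul (h1.pow (n + 1))
        convert h3 using 1
        push_cast
        simp only [id_eq, Pi.pow_apply]
        ring
      have := intervalIntegral.integral_eq_sub_of_hasDerivAt hderiv
        (by apply Continuous.intervalIntegrable; fun_prop)
      simpa using this
    rw [intervalIntegral.integral_sub ((hcont1.intervalIntegrable _ _).const_mul _)
        ((hcont2.intervalIntegrable _ _).const_mul _),
      intervalIntegral.integral_const_mul, intervalIntegral.integral_const_mul, ih,
      sub_eq_zero] at key0
    have h23 : (2 * (n:ℝ) + 3) ≠ 0 := by positivity
    apply mul_left_cancel₀ h23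
    rw [key0]
    have hG : Real.Gamma (((n+1 : ℕ) : ℝ) + 3 / 2) = ((n:ℝ) + 3 / 2) * Real.Gamma ((n:ℝ) + 3 / 2) := by
      push_cast
      rw [show ((n:ℝ) + 1 + 3 / 2) = ((n:ℝ) + 3 / 2) + 1 by ring,
        Real.Gamma_add_one (by positivity)]
    rw [hG]
    have hGn : Real.Gamma ((n:ℝ) + 3 / 2) ≠ 0 := (gamma_pos' n).ne'
    have h32 : ((n:ℝ) + 3 / 2) ≠ 0 := by positivity
    push_cast [Nat.factorial_succ]
    field_simp
    rw [show 2 * (n + 1) + 1 = (2 * n + 1) + 2 from by ring, pow_add]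
    ring

lemma hasSum_erf_aux (z : ℝ) (hz : 0 ≤ z) :
    HasSum (fun n : ℕ => z ^ (2 * n + 1) / Real.Gamma ((n : ℝ) + 3 / 2))
      (Real.exp (z ^ 2) *
        ((2 / Real.sqrt Real.pi) * ∫ t in (0:ℝ)..z, Real.exp (-t ^ 2))) := by
  have hπ : Real.sqrt Real.pi ≠ 0 := by positivity
  have h1 : HasSum (fun n : ℕ => ∫ t in (0:ℝ)..z, (z ^ 2 - t ^ 2) ^ n / n !)
      (∫ t in (0:ℝ)..z, Real.exp (z ^ 2 - t ^ 2)) := by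
    apply intervalIntegral.hasSum_integral_of_dominated_convergence
      (bound := fun n t => z ^ (2 * n) / n !)
    · intro n
      exact Continuous.aestronglyMeasurable (by fun_prop)
    · intro n
      filter_upwards with t ht
      rw [Set.uIoc_of_le hz] at ht
      have h0 : 0 ≤ z ^ 2 - t ^ 2 := by nlinarith [ht.1, ht.2]
      have habs : ‖(z ^ 2 - t ^ 2) ^ n / (n ! : ℝ)‖ = (z ^ 2 - t ^ 2) ^ n / n ! :=
        abs_of_nonneg (by positivity)
      rw [habs, pow_mul]
      gcongr
      nlinarith [ht.1]
    · filter_upwards with t _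
      simpa only [pow_mul] using Real.summable_pow_div_factorial (z ^ 2)
    · exact intervalIntegrable_const
    · filter_upwards with t _
      exact exp_hasSum' (z ^ 2 - t ^ 2)
  have h2 : ∀ n : ℕ, (∫ t in (0:ℝ)..z, (z ^ 2 - t ^ 2) ^ n / n !)
      = (Real.sqrt Real.pi / 2) * (z ^ (2 * n + 1) / Real.Gamma ((n : ℝ) + 3 / 2)) := by
    intro n
    rw [intervalIntegral.integral_div, key_integral]
    have hGn : Real.Gamma ((n:ℝ) + 3 / 2) ≠ 0 := (gamma_pos' n).ne'
    have hf : (n ! : ℝ) ≠ 0 := by positivity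
    field_simp
  have h3 : (∫ t in (0:ℝ)..z, Real.exp (z ^ 2 - t ^ 2))
      = (Real.sqrt Real.pi / 2) * (Real.exp (z ^ 2) *
        ((2 / Real.sqrt Real.pi) * ∫ t in (0:ℝ)..z, Real.exp (-t ^ 2))) := by
    simp_rw [sub_eq_add_neg, Real.exp_add]
    rw [intervalIntegral.integral_const_mul]
    field_simp
  simp only [h2] at h1
  rw [h3] at h1
  exact (hasSum_mul_left_iff (by positivity : Real.sqrt Real.pi / 2 ≠ 0)).mp h1

theorem sum_b_n (x y : ℝ) (hx : 0 ≤ x) (hy : 0 ≤ y) :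
    HasSum (fun n : ℕ =>
        y ^ ((n : ℝ) + 1 / 2) * Real.exp (-y) / Real.Gamma (n + 3 / 2) * x ^ (n + 1))
      (Real.sqrt x * Real.exp (-y) * Real.exp (x * y) * erf (Real.sqrt (x * y))) := by
  rcases eq_or_lt_of_le hy with rfl | hy'
  · have h0 : ∀ n : ℕ, (0:ℝ) ^ ((n : ℝ) + 1 / 2) = 0 := fun n =>
      Real.zero_rpow (by positivity)
    simp only [h0, zero_mul, zero_div, mul_zero, Real.sqrt_zero, erf,
      intervalIntegral.integral_same, Real.exp_zero, mul_one]
    exact hasSum_zero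
  · set z := Real.sqrt (x * y) with hzdef
    have hz : 0 ≤ z := Real.sqrt_nonneg _
    have hz2 : z ^ 2 = x * y := Real.sq_sqrt (by positivity)
    have hGn : ∀ n : ℕ, Real.Gamma ((n:ℝ) + 3 / 2) ≠ 0 := fun n => (gamma_pos' n).ne'
    have H := (hasSum_erf_aux z hz).mul_left (Real.sqrt x * Real.exp (-y))
    convert H using 1
    · rfl
    · funext n
      have hy12 : y ^ ((n:ℝ) + 1 / 2) = y ^ n * Real.sqrt y := by
        rw [Real.rpow_add hy', Real.rpow_natCast, ← Real.sqrt_eq_rpow]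
      have hsx : Real.sqrt x * z = x * Real.sqrt y := by
        rw [hzdef, ← Real.sqrt_mul hx, show x * (x * y) = x ^ 2 * y by ring,
          Real.sqrt_mul (by positivity), Real.sqrt_sq hx]
      rw [hy12, pow_succ, pow_succ z (2 * n), pow_mul, hz2]
      linear_combination (-(Real.exp (-y) * x ^ n * y ^ n / Real.Gamma ((n:ℝ) + 3 / 2))) * hsx
    · unfold erf
      rw [hz2]
      ring
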